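/- Let M be a non-negative random variable and let κ ∈ (1,2]. Suppose there exist constants 0 < c ≤ C and s₀ > 0 such that c·s^{−κ} ≤ P(M > s) ≤ C·s^{−κ} for all s ≥ s₀. Let p be a real number with κ/2 < p < κ. Then there exist constants 0 < c' ≤ C' and a₀ > 0 such that for all a ≥ a₀: c'·a^{p−κ} ≤ E[ (M²/(a+M))^p ] ≤ C'·a^{p−κ}. -/

import Mathlib

open MeasureTheory Real Set
open scoped ENNReal NNReal

set_option maxHeartbeats 2000000 in
theorem stmt_7 {Ω : Type*} [MeasurableSpace Ω] (μ : Measure Ω)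
    [IsProbabilityMeasure μ]
    (M : Ω → ℝ) (hmeas : Measurable M) (hnn : ∀ ω, 0 ≤ M ω)
    (κ : ℝ) (hκ1 : 1 < κ) (hκ2 : κ ≤ 2)
    (c C s₀ : ℝ) (hc : 0 < c) (hcC : c ≤ C) (hs₀ : 0 < s₀)
    (htail : ∀ s : ℝ, s₀ ≤ s →
      ENNReal.ofReal (c * s ^ (-κ)) ≤ μ {ω | s < M ω} ∧
      μ {ω | s < M ω} ≤ ENNReal.ofReal (C * s ^ (-κ)))
    (p : ℝ) (hp1 : κ / 2 < p) (hp2 : p < κ) :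
    ∃ c' C' a₀ : ℝ, 0 < c' ∧ c' ≤ C' ∧ 0 < a₀ ∧
      ∀ a : ℝ, a₀ ≤ a →
        ENNReal.ofReal (c' * a ^ (p - κ)) ≤
          ∫⁻ ω, ENNReal.ofReal ((M ω ^ 2 / (a + M ω)) ^ p) ∂μ ∧
        ∫⁻ ω, ENNReal.ofReal ((M ω ^ 2 / (a + M ω)) ^ p) ∂μ ≤
          ENNReal.ofReal (C' * a ^ (p - κ)) := by
  have hκ0 : 0 < κ := by linarith
  have hp0 : 0 < p := by linarith
  have hC : 0 < C := lt_of_lt_of_le hc hcC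
  -- the exponents
  set r1 : ℝ := -(κ / (2 * p)) with hr1def
  set r2 : ℝ := -(κ / p) with hr2def
  have hr1 : -1 < r1 := by
    have : κ / (2 * p) < 1 := (div_lt_one (by positivity)).2 (by linarith)
    rw [hr1def]; linarith
  have hr11 : 0 < r1 + 1 := by linarith
  have hpr1 : p * r1 = -(κ / 2) := by rw [hr1def]; field_simp
  have hr2 : r2 < -1 := by
    have : 1 < κ / p := (one_lt_div hp0).2 hp2
    rw [hr2def]; linarith
  have hr21 : r2 + 1 < 0 := by linarith
  have hpr2 : p * r2 = -κ := by rw [hr2def]; field_simp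
  -- the constants
  set c' : ℝ := c * (2 : ℝ)⁻¹ ^ p with hc'def
  set K1 : ℝ := C / (r1 + 1) with hK1def
  set K2 : ℝ := C / (-(r2 + 1)) with hK2def
  set Cu : ℝ := s₀ ^ (2 * p) + K1 + K2 with hCudef
  have hc'0 : 0 < c' := by
    have : (0:ℝ) < (2 : ℝ)⁻¹ ^ p := Real.rpow_pos_of_pos (by norm_num) p
    positivity
  have hK10 : 0 < K1 := div_pos hC hr11
  have hK20 : 0 < K2 := div_pos hC (by linarith)
  have hCu0 : 0 < Cu := by
    have : (0:ℝ) < s₀ ^ (2 * p) := Real.rpow_pos_of_pos hs₀ _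
    rw [hCudef]; linarith
  refine ⟨c', max c' Cu, max s₀ 1, hc'0, le_max_left _ _,
    lt_of_lt_of_le zero_lt_one (le_max_right _ _), ?_⟩
  intro a ha
  have has : s₀ ≤ a := le_trans (le_max_left _ _) ha
  have ha1 : (1:ℝ) ≤ a := le_trans (le_max_right _ _) ha
  have ha0 : (0:ℝ) < a := lt_of_lt_of_le zero_lt_one ha1
  have haκ : (0:ℝ) < a ^ (p - κ) := Real.rpow_pos_of_pos ha0 _
  -- basic facts about the integrand
  have hbnn : ∀ ω, 0 ≤ M ω ^ 2 / (a + M ω) := fun ω =>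
    div_nonneg (sq_nonneg _) (by linarith [hnn ω])
  have hfnn : ∀ ω, 0 ≤ (M ω ^ 2 / (a + M ω)) ^ p := fun ω =>
    Real.rpow_nonneg (hbnn ω) p
  have hfm : Measurable fun ω => (M ω ^ 2 / (a + M ω)) ^ p :=
    ((hmeas.pow_const 2).div (measurable_const.add hmeas)).pow measurable_const
  constructor
  · -- LOWER BOUND
    have hsetm : MeasurableSet {ω | a < M ω} := measurableSet_lt measurable_const hmeas
    have key : ∀ ω, {ω | a < M ω}.indicator (fun _ => ENNReal.ofReal ((a / 2) ^ p)) ω ≤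
        ENNReal.ofReal ((M ω ^ 2 / (a + M ω)) ^ p) := by
      intro ω
      by_cases hω : ω ∈ {ω | a < M ω}
      · rw [Set.indicator_of_mem hω]
        apply ENNReal.ofReal_le_ofReal
        apply Real.rpow_le_rpow (by positivity) ?_ hp0.le
        have hm : a < M ω := hω
        rw [div_le_div_iff₀ (by norm_num) (by linarith [hnn ω])]
        nlinarith [hnn ω]
      · rw [Set.indicator_of_notMem hω]; exact zero_le
    calc ENNReal.ofReal (c' * a ^ (p - κ))
        = ENNReal.ofReal ((a / 2) ^ p) * ENNReal.ofReal (c * a ^ (-κ)) := by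
          rw [← ENNReal.ofReal_mul (by positivity)]
          congr 1
          rw [div_eq_mul_inv, Real.mul_rpow ha0.le (by norm_num),
            show p - κ = p + -κ by ring, Real.rpow_add ha0, hc'def]
          ring
      _ ≤ ENNReal.ofReal ((a / 2) ^ p) * μ {ω | a < M ω} :=
          mul_le_mul_right (htail a has).1 _
      _ = ∫⁻ ω, {ω | a < M ω}.indicator (fun _ => ENNReal.ofReal ((a / 2) ^ p)) ω ∂μ := by
          rw [lintegral_indicator_const hsetm]
      _ ≤ _ := lintegral_mono key
  · -- UPPER BOUND
    set T0 : ℝ := s₀ ^ (2 * p) * a ^ (-p) with hT0def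
    set A : ℝ := a ^ p with hAdef
    have hT00 : 0 < T0 := by
      have h1 : (0:ℝ) < s₀ ^ (2 * p) := Real.rpow_pos_of_pos hs₀ _
      have h2 : (0:ℝ) < a ^ (-p) := Real.rpow_pos_of_pos ha0 _
      positivity
    have hA0 : 0 < A := Real.rpow_pos_of_pos ha0 _
    have hT0A : T0 ≤ A := by
      have h1 : s₀ ^ (2 * p) ≤ a ^ (2 * p) := Real.rpow_le_rpow hs₀.le has (by positivity)
      have h2 : a ^ (2 * p) * a ^ (-p) = A := by
        rw [hAdef, ← Real.rpow_add ha0]; ring_nf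
      calc T0 ≤ a ^ (2 * p) * a ^ (-p) :=
            mul_le_mul_of_nonneg_right h1 (Real.rpow_nonneg ha0.le _)
        _ = A := h2
    -- the key pointwise implication
    have hkey : ∀ t : ℝ, 0 < t → ∀ ω, t < (M ω ^ 2 / (a + M ω)) ^ p →
        t ^ (1 / p) < M ω ∧ a ^ (1 / 2 : ℝ) * t ^ (1 / (2 * p)) < M ω := by
      intro t ht ω hω
      have hm0 : 0 ≤ M ω := hnn ω
      have ham : 0 < a + M ω := by linarith
      have hb0 : 0 < M ω ^ 2 / (a + M ω) := by
        rcases lt_or_eq_of_le (hbnn ω) with h | h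
        · exact h
        · exfalso
          rw [← h, Real.zero_rpow hp0.ne'] at hω
          linarith
      have hbm : M ω ^ 2 / (a + M ω) ≤ M ω := by
        rw [div_le_iff₀ ham]
        nlinarith
      have hm1 : t ^ (1 / p) < M ω ^ 2 / (a + M ω) := by
        have := Real.rpow_lt_rpow ht.le hω (by positivity : (0:ℝ) < 1 / p)
        rwa [← Real.rpow_mul hb0.le, mul_one_div, div_self hp0.ne', Real.rpow_one] at this
      constructor
      · exact lt_of_lt_of_le hm1 hbm
      · have hmul : t ^ (1 / p) * (a + M ω) < M ω ^ 2 := by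
          have := mul_lt_mul_of_pos_right hm1 ham
          rwa [div_mul_cancel₀ _ ham.ne'] at this
        have htp : 0 < t ^ (1 / p) := Real.rpow_pos_of_pos ht _
        have hsq : (a ^ (1 / 2 : ℝ) * t ^ (1 / (2 * p))) ^ 2 = a * t ^ (1 / p) := by
          rw [mul_pow, ← Real.rpow_natCast (a ^ (1 / 2 : ℝ)) 2,
            ← Real.rpow_natCast (t ^ (1 / (2 * p))) 2,
            ← Real.rpow_mul ha0.le, ← Real.rpow_mul ht.le,
            show (1 / 2 : ℝ) * ((2:ℕ):ℝ) = 1 by norm_num,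
            show (1 / (2 * p) : ℝ) * ((2:ℕ):ℝ) = 1 / p by push_cast; field_simp,
            Real.rpow_one]
        have haux : a * t ^ (1 / p) < M ω ^ 2 := by
          have h1 : 0 ≤ t ^ (1 / p) * M ω := mul_nonneg htp.le hm0
          have h2 : t ^ (1 / p) * (a + M ω) = a * t ^ (1 / p) + t ^ (1 / p) * M ω := by
            ring
          linarith [hmul, h1, h2]
        apply lt_of_pow_lt_pow_left₀ 2 hm0
        rw [hsq]
        exact haux
    -- layer cake
    have layer : ∫⁻ ω, ENNReal.ofReal ((M ω ^ 2 / (a + M ω)) ^ p) ∂μ =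
        ∫⁻ t in Ioi (0:ℝ), μ {ω | t < (M ω ^ 2 / (a + M ω)) ^ p} :=
      lintegral_eq_lintegral_meas_lt μ (ae_of_all _ hfnn) hfm.aemeasurable
    rw [layer]
    set g1 : ℝ → ℝ≥0∞ := fun t => ENNReal.ofReal (C * a ^ (-(κ / 2)) * t ^ r1) with hg1def
    set g2 : ℝ → ℝ≥0∞ := fun t => ENNReal.ofReal (C * t ^ r2) with hg2def
    have hg1m : Measurable g1 := by
      exact (measurable_const.mul (measurable_id.pow measurable_const)).ennreal_ofReal
    have hg2m : Measurable g2 := by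
      exact (measurable_const.mul (measurable_id.pow measurable_const)).ennreal_ofReal
    -- pointwise domination
    have hpt : ∀ t ∈ Ioi (0:ℝ), μ {ω | t < (M ω ^ 2 / (a + M ω)) ^ p} ≤
        (Ioc 0 T0).indicator (fun _ => (1:ℝ≥0∞)) t + ((Ioc T0 A).indicator g1 t
          + (Ioi A).indicator g2 t) := by
      intro t ht
      rw [mem_Ioi] at ht
      rcases le_or_gt t T0 with h1 | h1
      · have : (Ioc 0 T0).indicator (fun _ => (1:ℝ≥0∞)) t = 1 :=
          Set.indicator_of_mem (mem_Ioc.mpr ⟨ht, h1⟩) _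
        calc μ {ω | t < (M ω ^ 2 / (a + M ω)) ^ p} ≤ 1 := prob_le_one
          _ = (Ioc 0 T0).indicator (fun _ => (1:ℝ≥0∞)) t := this.symm
          _ ≤ _ := le_self_add
      rcases le_or_gt t A with h2 | h2
      · -- middle regime
        have hueq : a ^ (1 / 2 : ℝ) * T0 ^ (1 / (2 * p)) = s₀ := by
          have hT0pow : T0 ^ (1 / (2 * p)) = s₀ * a ^ (-(1 / 2 : ℝ)) := by
            rw [hT0def, Real.mul_rpow (Real.rpow_nonneg hs₀.le _) (Real.rpow_nonneg ha0.le _),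
              ← Real.rpow_mul hs₀.le, ← Real.rpow_mul ha0.le,
              show 2 * p * (1 / (2 * p)) = 1 by field_simp,
              show -p * (1 / (2 * p)) = -(1 / 2 : ℝ) by field_simp,
              Real.rpow_one]
          rw [hT0pow, show a ^ (1 / 2 : ℝ) * (s₀ * a ^ (-(1 / 2 : ℝ)))
              = s₀ * (a ^ (1 / 2 : ℝ) * a ^ (-(1 / 2 : ℝ))) by ring,
            ← Real.rpow_add ha0]
          norm_num
        have hu : s₀ ≤ a ^ (1 / 2 : ℝ) * t ^ (1 / (2 * p)) := by
          rw [← hueq]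
          exact mul_le_mul_of_nonneg_left
            (Real.rpow_le_rpow hT00.le h1.le (by positivity)) (Real.rpow_nonneg ha0.le _)
        have hsub : {ω | t < (M ω ^ 2 / (a + M ω)) ^ p} ⊆
            {ω | a ^ (1 / 2 : ℝ) * t ^ (1 / (2 * p)) < M ω} :=
          fun ω hω => (hkey t ht ω hω).2
        have hbound : μ {ω | t < (M ω ^ 2 / (a + M ω)) ^ p} ≤ g1 t := by
          refine le_trans (le_trans (measure_mono hsub) (htail _ hu).2) ?_
          apply ENNReal.ofReal_le_ofReal
          rw [Real.mul_rpow (Real.rpow_nonneg ha0.le _) (Real.rpow_nonneg ht.le _),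
            ← Real.rpow_mul ha0.le, ← Real.rpow_mul ht.le,
            show 1 / 2 * -κ = -(κ / 2) by ring,
            show 1 / (2 * p) * -κ = r1 by rw [hr1def]; ring, mul_assoc]
        have : (Ioc T0 A).indicator g1 t = g1 t := Set.indicator_of_mem (mem_Ioc.mpr ⟨h1, h2⟩) _
        calc μ {ω | t < (M ω ^ 2 / (a + M ω)) ^ p} ≤ g1 t := hbound
          _ = (Ioc T0 A).indicator g1 t := this.symm
          _ ≤ (Ioc T0 A).indicator g1 t + (Ioi A).indicator g2 t := le_self_add
          _ ≤ _ := le_add_self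
      · -- upper regime
        have hu2 : s₀ ≤ t ^ (1 / p) := by
          have : a < t ^ (1 / p) := by
            have := Real.rpow_lt_rpow hA0.le h2 (by positivity : (0:ℝ) < 1 / p)
            rwa [hAdef, ← Real.rpow_mul ha0.le, mul_one_div, div_self hp0.ne',
              Real.rpow_one] at this
          linarith
        have hsub : {ω | t < (M ω ^ 2 / (a + M ω)) ^ p} ⊆ {ω | t ^ (1 / p) < M ω} :=
          fun ω hω => (hkey t ht ω hω).1
        have hbound : μ {ω | t < (M ω ^ 2 / (a + M ω)) ^ p} ≤ g2 t := by
          refine le_trans (le_trans (measure_mono hsub) (htail _ hu2).2) ?_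
          apply ENNReal.ofReal_le_ofReal
          rw [← Real.rpow_mul ht.le, show 1 / p * -κ = r2 by rw [hr2def]; ring]
        have : (Ioi A).indicator g2 t = g2 t := Set.indicator_of_mem h2 _
        calc μ {ω | t < (M ω ^ 2 / (a + M ω)) ^ p} ≤ g2 t := hbound
          _ = (Ioi A).indicator g2 t := this.symm
          _ ≤ (Ioc T0 A).indicator g1 t + (Ioi A).indicator g2 t := le_add_self
          _ ≤ _ := le_add_self
    have hmono := setLIntegral_mono (μ := volume) (s := Ioi 0) (f := fun t => μ {ω | t < (M ω ^ 2 / (a + M ω)) ^ p})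
      ((measurable_const.indicator measurableSet_Ioc).add
        ((hg1m.indicator measurableSet_Ioc).add (hg2m.indicator measurableSet_Ioi))) hpt
    refine le_trans hmono ?_
    simp only [Pi.add_apply]
    rw [lintegral_add_left (measurable_const.indicator measurableSet_Ioc),
      lintegral_add_left (hg1m.indicator measurableSet_Ioc)]
    -- piece 1
    have hI1 : ∫⁻ t in Ioi (0:ℝ), (Ioc 0 T0).indicator (fun _ => (1:ℝ≥0∞)) t
        = ENNReal.ofReal T0 := by
      rw [lintegral_indicator measurableSet_Ioc, Measure.restrict_restrict measurableSet_Ioc,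
        Set.inter_eq_self_of_subset_left Ioc_subset_Ioi_self, setLIntegral_one,
        Real.volume_Ioc, sub_zero]
    -- piece 2
    have hI2 : ∫⁻ t in Ioi (0:ℝ), (Ioc T0 A).indicator g1 t
        ≤ ENNReal.ofReal (K1 * a ^ (p - κ)) := by
      rw [lintegral_indicator measurableSet_Ioc, Measure.restrict_restrict measurableSet_Ioc,
        Set.inter_eq_self_of_subset_left (Ioc_subset_Ioi_self.trans (Ioi_subset_Ioi hT00.le))]
      refine le_trans (lintegral_mono_set (Ioc_subset_Ioc_left hT00.le)) ?_
      have hint : IntegrableOn (fun t : ℝ => C * a ^ (-(κ / 2)) * t ^ r1) (Ioc 0 A) :=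
        ((intervalIntegrable_iff_integrableOn_Ioc_of_le hA0.le).1
          (intervalIntegral.intervalIntegrable_rpow' hr1)).const_mul _
      have hnn' : 0 ≤ᵐ[volume.restrict (Ioc (0:ℝ) A)]
          fun t : ℝ => C * a ^ (-(κ / 2)) * t ^ r1 := by
        refine (ae_restrict_iff' measurableSet_Ioc).2 (ae_of_all _ fun x hx => ?_)
        have := hx.1
        have h1 : (0:ℝ) ≤ a ^ (-(κ / 2)) := Real.rpow_nonneg ha0.le _
        have h2 : (0:ℝ) ≤ x ^ r1 := Real.rpow_nonneg (le_of_lt this) _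
        positivity
      have hval : ∫ t in Ioc (0:ℝ) A, C * a ^ (-(κ / 2)) * t ^ r1
          = K1 * a ^ (p - κ) := by
        rw [integral_const_mul, ← intervalIntegral.integral_of_le hA0.le,
          integral_rpow (Or.inl hr1), Real.zero_rpow hr11.ne', sub_zero]
        have hApow : A ^ (r1 + 1) = a ^ (p * (r1 + 1)) := by
          rw [hAdef, ← Real.rpow_mul ha0.le]
        have hcomb : a ^ (-(κ / 2)) * a ^ (p * (r1 + 1)) = a ^ (p - κ) := by
          rw [← Real.rpow_add ha0]
          congr 1
          have : p * (r1 + 1) = -(κ / 2) + p := by rw [mul_add, hpr1]; ring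
          rw [this]; ring
        calc C * a ^ (-(κ / 2)) * (A ^ (r1 + 1) / (r1 + 1))
            = C / (r1 + 1) * (a ^ (-(κ / 2)) * A ^ (r1 + 1)) := by ring
          _ = K1 * a ^ (p - κ) := by rw [hApow, hcomb, hK1def]
      calc ∫⁻ t in Ioc (0:ℝ) A, g1 t
          = ENNReal.ofReal (∫ t in Ioc (0:ℝ) A, C * a ^ (-(κ / 2)) * t ^ r1) :=
            (ofReal_integral_eq_lintegral_ofReal hint hnn').symm
        _ = ENNReal.ofReal (K1 * a ^ (p - κ)) := by rw [hval]
        _ ≤ ENNReal.ofReal (K1 * a ^ (p - κ)) := le_rfl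
    -- piece 3
    have hI3 : ∫⁻ t in Ioi (0:ℝ), (Ioi A).indicator g2 t
        ≤ ENNReal.ofReal (K2 * a ^ (p - κ)) := by
      rw [lintegral_indicator measurableSet_Ioi, Measure.restrict_restrict measurableSet_Ioi,
        Set.inter_eq_self_of_subset_left (Ioi_subset_Ioi hA0.le)]
      have hint : IntegrableOn (fun t : ℝ => C * t ^ r2) (Ioi A) :=
        (integrableOn_Ioi_rpow_of_lt hr2 hA0).const_mul _
      have hnn' : 0 ≤ᵐ[volume.restrict (Ioi A)] fun t : ℝ => C * t ^ r2 := by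
        refine (ae_restrict_iff' measurableSet_Ioi).2 (ae_of_all _ fun x hx => ?_)
        have hx0 : (0:ℝ) < x := lt_trans hA0 hx
        have h2 : (0:ℝ) ≤ x ^ r2 := Real.rpow_nonneg hx0.le _
        positivity
      have hval : ∫ t in Ioi A, C * t ^ r2 = K2 * a ^ (p - κ) := by
        rw [integral_const_mul, integral_Ioi_rpow_of_lt hr2 hA0]
        have hApow : A ^ (r2 + 1) = a ^ (p - κ) := by
          rw [hAdef, ← Real.rpow_mul ha0.le]
          congr 1
          rw [mul_add, hpr2]; ring
        have hgen : ∀ X y : ℝ, y ≠ 0 → C * (-X / y) = C / (-y) * X := by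
          intro X y hy
          field_simp
        calc C * (-A ^ (r2 + 1) / (r2 + 1)) = C / (-(r2 + 1)) * A ^ (r2 + 1) :=
              hgen _ _ (ne_of_lt hr21)
          _ = K2 * a ^ (p - κ) := by rw [hApow, hK2def]
      calc ∫⁻ t in Ioi A, g2 t = ENNReal.ofReal (∫ t in Ioi A, C * t ^ r2) :=
            (ofReal_integral_eq_lintegral_ofReal hint hnn').symm
        _ = ENNReal.ofReal (K2 * a ^ (p - κ)) := by rw [hval]
        _ ≤ ENNReal.ofReal (K2 * a ^ (p - κ)) := le_rfl
    rw [hI1]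
    refine le_trans (add_le_add_right (add_le_add hI2 hI3) _) ?_
    rw [← ENNReal.ofReal_add (by positivity) (by positivity),
      ← ENNReal.ofReal_add hT00.le (by positivity)]
    apply ENNReal.ofReal_le_ofReal
    have hT0le : T0 ≤ s₀ ^ (2 * p) * a ^ (p - κ) := by
      rw [hT0def]
      exact mul_le_mul_of_nonneg_left
        (Real.rpow_le_rpow_of_exponent_le ha1 (by linarith)) (Real.rpow_nonneg hs₀.le _)
    have hCu : Cu ≤ max c' Cu := le_max_right _ _
    have hs2p : (0:ℝ) < s₀ ^ (2 * p) := Real.rpow_pos_of_pos hs₀ _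
    nlinarith [mul_le_mul_of_nonneg_right hCu haκ.le]
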